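/- arXiv:1210.7383 — 7 statements merged into one kernel-verified Lean document; each statement's English description precedes it below -/
import Mathlib

section
/- Let ℓ be a log-scale on a set X with constant Δ > 0, i.e. ℓ : X × X → ℝ ∪ {∞} is symmetric, ℓ(x,y) = ∞ iff x = y, and ℓ(x,z) ≥ min(ℓ(x,y), ℓ(y,z)) − Δ for all x,y,z. For n ∈ ℝ let Γ_n be the graph on vertex set X where x,y are adjacent iff ℓ(x,y) ≥ n, and let d_n denote graph distance in Γ_n. Then with α = (log 2)/Δ there exists C > 0 such that d_n(x,y) ≥ C·e^{α(n − ℓ(x,y))} for all x ≠ y in X and all n. -/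
/-- A log-scale on a set `X` with constant `Δ`: a symmetric function to `ℝ ∪ {∞}`
(modelled as `EReal`, never taking the value `⊥`), infinite exactly on the diagonal,
satisfying the weak ultrametric inequality with constant `Δ`. -/
def IsLogScale {X : Type*} (ℓ : X → X → EReal) (Δ : ℝ) : Prop :=
  0 < Δ ∧
  (∀ x y, ℓ x y = ℓ y x) ∧
  (∀ x y, ℓ x y = ⊤ ↔ x = y) ∧
  (∀ x y, ℓ x y ≠ ⊥) ∧
  (∀ x y z, min (ℓ x y) (ℓ y z) - (Δ : EReal) ≤ ℓ x z)

lemma logScale_chain_key {X : Type*} (ℓ : X → X → EReal) (Δ : ℝ)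
    (h : IsLogScale ℓ Δ) :
    ∀ k m : ℕ, 1 ≤ m → m ≤ 2 ^ k → ∀ (n : ℝ) (c : ℕ → X),
      (∀ i < m, (n : EReal) ≤ ℓ (c i) (c (i + 1))) →
      ((n - k * Δ : ℝ) : EReal) ≤ ℓ (c 0) (c m) := by
  obtain ⟨hΔ, -, -, -, hultra⟩ := h
  intro k
  induction k with
  | zero =>
    intro m hm1 hm2 n c hc
    interval_cases m
    simpa using hc 0 (by norm_num)
  | succ k ih =>
    intro m hm1 hm2 n c hc
    by_cases hle : m ≤ 2 ^ k
    · refine le_trans ?_ (ih m hm1 hle n c hc)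
      apply EReal.coe_le_coe_iff.2
      have : (k : ℝ) * Δ ≤ (k + 1) * Δ := by nlinarith
      push_cast
      linarith
    · push_neg at hle
      have h1 : ((n - k * Δ : ℝ) : EReal) ≤ ℓ (c 0) (c (2 ^ k)) :=
        ih (2 ^ k) (Nat.one_le_two_pow) le_rfl n c
          (fun i hi => hc i (lt_trans hi hle))
      have h2 : ((n - k * Δ : ℝ) : EReal) ≤ ℓ (c (2 ^ k)) (c m) := by
        have := ih (m - 2 ^ k) (by omega) (by simp [pow_succ] at hm2; omega) n
          (fun i => c (2 ^ k + i))
          (fun i hi => by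
            have := hc (2 ^ k + i) (by omega)
            simpa [Nat.add_assoc] using this)
        simpa [Nat.add_sub_cancel' hle.le] using this
      have hmin : ((n - k * Δ : ℝ) : EReal) ≤ min (ℓ (c 0) (c (2 ^ k))) (ℓ (c (2 ^ k)) (c m)) :=
        le_min h1 h2
      have := hultra (c 0) (c (2 ^ k)) (c m)
      refine le_trans ?_ (le_trans (EReal.sub_le_sub hmin le_rfl) this)
      rw [← EReal.coe_sub]
      apply EReal.coe_le_coe_iff.2
      push_cast
      linarith

/-- With `α = (log 2)/Δ`, there is `C > 0` such that `d_n(x,y) ≥ C·e^{α(n − ℓ(x,y))}`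
for all `x ≠ y` and all `n`, where `d_n` is the graph distance in the graph whose
edges are the pairs with `ℓ`-value at least `n` (the bound is expressed by saying
that every chain from `x` to `y` with consecutive `ℓ`-values `≥ n` has length at
least `C·e^{α(n − ℓ(x,y))}`). -/
theorem logScale_lower_exponent {X : Type*} (ℓ : X → X → EReal) (Δ : ℝ)
    (h : IsLogScale ℓ Δ) :
    ∃ C > (0 : ℝ), ∀ (n : ℝ) (x y : X), x ≠ y →
      ∀ (m : ℕ) (c : ℕ → X), c 0 = x → c m = y →
        (∀ i < m, (n : EReal) ≤ ℓ (c i) (c (i + 1))) →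
        C * Real.exp ((Real.log 2 / Δ) * (n - (ℓ x y).toReal)) ≤ (m : ℝ) := by
  obtain ⟨hΔ, hsym, htop, hbot, hu⟩ := h
  refine ⟨1/2, by norm_num, fun n x y hxy m c hc0 hcm hc => ?_⟩
  -- m ≥ 1
  have hm1 : 1 ≤ m := by
    rcases Nat.eq_zero_or_pos m with rfl | hm
    · exact absurd (hc0 ▸ hcm : x = y) hxy
    · exact hm
  set k := Nat.clog 2 m with hk
  have hmk : m ≤ 2 ^ k := Nat.le_pow_clog (by norm_num) m
  have hkey : ((n - k * Δ : ℝ) : EReal) ≤ ℓ x y := by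
    have := logScale_chain_key ℓ Δ ⟨hΔ, hsym, htop, hbot, hu⟩ k m hm1 hmk n c hc
    rwa [hc0, hcm] at this
  -- ℓ x y is a finite real
  have hne_top : ℓ x y ≠ ⊤ := fun ht => hxy ((htop x y).1 ht)
  have hreal : ℓ x y = ((ℓ x y).toReal : EReal) := (EReal.coe_toReal hne_top (hbot x y)).symm
  have hkey' : n - k * Δ ≤ (ℓ x y).toReal := by
    rw [hreal] at hkey
    exact_mod_cast hkey
  -- 2^k ≤ 2*m
  have h2k : (2 : ℝ) ^ k ≤ 2 * m := by
    rcases eq_or_lt_of_le hm1 with hm | hm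
    · have : k = 0 := by rw [hk, ← hm]; simp
      rw [this]; norm_num
      have : (1:ℝ) ≤ m := by exact_mod_cast hm1
      linarith
    · have : 2 ^ (k - 1) < m := Nat.pow_pred_clog_lt_self (by norm_num) hm
      have hk1 : 1 ≤ k := by
        rw [hk]
        exact Nat.one_le_iff_ne_zero.mpr (by
          intro h0
          have := Nat.le_pow_clog (b := 2) (by norm_num) m
          rw [h0] at this; simp at this; omega)
      have h2 : 2 ^ k ≤ 2 * m := by
        have : 2 ^ k = 2 * 2 ^ (k - 1) := by
          rw [← pow_succ']
          congr 1
          omega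
        omega
      exact_mod_cast h2
  -- exp bound
  have hexp : Real.exp ((Real.log 2 / Δ) * (n - (ℓ x y).toReal)) ≤ 2 ^ k := by
    have hα : 0 < Real.log 2 / Δ := div_pos (Real.log_pos one_lt_two) hΔ
    have h1 : (Real.log 2 / Δ) * (n - (ℓ x y).toReal) ≤ (Real.log 2 / Δ) * (k * Δ) := by
      apply mul_le_mul_of_nonneg_left (by linarith) hα.le
    have h2 : (Real.log 2 / Δ) * (k * Δ) = k * Real.log 2 := by
      field_simp
    calc Real.exp ((Real.log 2 / Δ) * (n - (ℓ x y).toReal))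
        ≤ Real.exp (k * Real.log 2) := by rw [← h2]; exact Real.exp_le_exp.2 h1
      _ = 2 ^ k := by
          rw [Real.exp_nat_mul, Real.exp_log (by norm_num)]
  linarith
end

section
/- Subsequence lemma: Let ℓ be a log-scale on X with constant Δ. Let x_0, x_1, …, x_m be a finite sequence with ℓ(x_i, x_{i+1}) ≥ n for all i, and let n_0 ≤ n. Then there exists a subsequence y_0 = x_0, y_1, …, y_t = x_m of (x_i) such that n_0 − 2Δ ≤ ℓ(y_i, y_{i+1}) < n_0 for all i = 0, …, t−1, provided ℓ(x_0, x_m) < n_0. -/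
open Classical in
lemma logScale_subsequence_aux {X : Type*} (ℓ : X → X → EReal) (Δ : ℝ)
    (h : IsLogScale ℓ Δ) (n n₀ : ℝ) (hn : n₀ ≤ n) (m : ℕ) (x : ℕ → X)
    (hchain : ∀ i < m, (n : EReal) ≤ ℓ (x i) (x (i + 1))) :
    ∀ d j, m - j = d → j < m → ℓ (x j) (x m) < (n₀ : EReal) →
    ∃ (t : ℕ) (σ : ℕ → ℕ), σ 0 = j ∧ σ t = m ∧ (∀ i < t, σ i < σ (i + 1)) ∧
      ∀ i < t, ((n₀ - 2 * Δ : ℝ) : EReal) ≤ ℓ (x (σ i)) (x (σ (i + 1))) ∧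
        ℓ (x (σ i)) (x (σ (i + 1))) < (n₀ : EReal) := by
  obtain ⟨hΔ, hsymm, htop, hbot, hineq⟩ := h
  intro d
  induction d using Nat.strong_induction_on with
  | _ d ih =>
    intro j hd hjm hlt
    by_cases hcase : ((n₀ - 2 * Δ : ℝ) : EReal) ≤ ℓ (x j) (x m)
    · -- one step suffices
      refine ⟨1, fun i => if i = 0 then j else m, by simp, by simp, ?_, ?_⟩
      · intro i hi
        interval_cases i
        simpa using hjm
      · intro i hi
        interval_cases i
        simpa using ⟨hcase, hlt⟩
    · -- ℓ(x_j, x_m) < n₀ - 2Δ : find maximal k with ℓ(x_j,x_k) ≥ n₀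
      have hP1 : (n₀ : EReal) ≤ ℓ (x j) (x (j + 1)) :=
        le_trans (by exact_mod_cast hn) (hchain j hjm)
      set P : ℕ → Prop := fun k => (n₀ : EReal) ≤ ℓ (x j) (x k) with hP
      set k : ℕ := Nat.findGreatest P m with hkdef
      have hk1 : j + 1 ≤ k := Nat.le_findGreatest hjm hP1
      have hkm : k ≤ m := Nat.findGreatest_le m
      have hkP : P k := Nat.findGreatest_spec hjm hP1
      have hkm' : k < m := by
        rcases lt_or_eq_of_le hkm with h' | h'
        · exact h'
        · exact absurd (h' ▸ hkP) (not_le.mpr hlt)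
      -- next point j' = k + 1
      have hstep_lt : ℓ (x j) (x (k + 1)) < (n₀ : EReal) := by
        have := Nat.findGreatest_is_greatest (P := P) (n := m)
          (k := k + 1) (by omega) (by omega)
        exact not_le.mp this
      have hchain_k : (n₀ : EReal) ≤ ℓ (x k) (x (k + 1)) :=
        le_trans (by exact_mod_cast hn) (hchain k hkm')
      have hstep_ge : ((n₀ - Δ : ℝ) : EReal) ≤ ℓ (x j) (x (k + 1)) := by
        have h1 : (n₀ : EReal) ≤ min (ℓ (x j) (x k)) (ℓ (x k) (x (k + 1))) :=
          le_min hkP hchain_k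
        calc ((n₀ - Δ : ℝ) : EReal) = (n₀ : EReal) - (Δ : EReal) := by
              rw [EReal.coe_sub]
          _ ≤ min (ℓ (x j) (x k)) (ℓ (x k) (x (k + 1))) - (Δ : EReal) :=
              EReal.sub_le_sub h1 le_rfl
          _ ≤ ℓ (x j) (x (k + 1)) := hineq _ _ _
      have h2Δ : ((n₀ - 2 * Δ : ℝ) : EReal) < ((n₀ - Δ : ℝ) : EReal) := by
        exact_mod_cast by linarith
      have hstep_ge2 : ((n₀ - 2 * Δ : ℝ) : EReal) ≤ ℓ (x j) (x (k + 1)) :=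
        le_trans h2Δ.le hstep_ge
      have hj'm : k + 1 < m := by
        rcases lt_or_eq_of_le (Nat.succ_le_of_lt hkm') with h' | h'
        · exact h'
        · exfalso
          rw [← h'] at hcase
          exact hcase hstep_ge2
      -- invariant: ℓ(x_{k+1}, x_m) < n₀
      have hinv : ℓ (x (k + 1)) (x m) < (n₀ : EReal) := by
        by_contra hc
        push_neg at hc
        apply hcase
        have h1 : ((n₀ - Δ : ℝ) : EReal) ≤
            min (ℓ (x j) (x (k + 1))) (ℓ (x (k + 1)) (x m)) :=
          le_min hstep_ge (le_trans (by exact_mod_cast (by linarith : n₀ - Δ ≤ n₀)) hc)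
        calc ((n₀ - 2 * Δ : ℝ) : EReal)
            = ((n₀ - Δ : ℝ) : EReal) - (Δ : EReal) := by
              rw [← EReal.coe_sub]; norm_cast; ring
          _ ≤ min (ℓ (x j) (x (k + 1))) (ℓ (x (k + 1)) (x m)) - (Δ : EReal) :=
              EReal.sub_le_sub h1 le_rfl
          _ ≤ ℓ (x j) (x m) := hineq _ _ _
      obtain ⟨t', σ', hσ0, hσt, hσmono, hσb⟩ :=
        ih (m - (k + 1)) (by omega) (k + 1) rfl hj'm hinv
      refine ⟨t' + 1, fun i => if i = 0 then j else σ' (i - 1), by simp, by simpa using hσt,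
        ?_, ?_⟩
      · intro i hi
        match i with
        | 0 => simpa [hσ0] using (by omega : j < k + 1)
        | (i + 1) =>
          simpa using hσmono i (by omega)
      · intro i hi
        match i with
        | 0 => simpa [hσ0] using ⟨hstep_ge2, hstep_lt⟩
        | (i + 1) =>
          simpa using hσb i (by omega)

/-- Subsequence lemma: if `x_0, …, x_m` is a chain with `ℓ(x_i, x_{i+1}) ≥ n`,
`n₀ ≤ n`, and `ℓ(x_0, x_m) < n₀`, then there is a subsequence
`y_0 = x_0, y_1, …, y_t = x_m` with `n₀ − 2Δ ≤ ℓ(y_i, y_{i+1}) < n₀` for all `i`. -/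
theorem logScale_subsequence {X : Type*} (ℓ : X → X → EReal) (Δ : ℝ)
    (h : IsLogScale ℓ Δ) (n n₀ : ℝ) (hn : n₀ ≤ n) (m : ℕ) (x : ℕ → X)
    (hchain : ∀ i < m, (n : EReal) ≤ ℓ (x i) (x (i + 1)))
    (hends : ℓ (x 0) (x m) < (n₀ : EReal)) :
    ∃ (t : ℕ) (σ : ℕ → ℕ), σ 0 = 0 ∧ σ t = m ∧ (∀ i < t, σ i < σ (i + 1)) ∧
      ∀ i < t, ((n₀ - 2 * Δ : ℝ) : EReal) ≤ ℓ (x (σ i)) (x (σ (i + 1))) ∧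
        ℓ (x (σ i)) (x (σ (i + 1))) < (n₀ : EReal) := by
  rcases Nat.eq_zero_or_pos m with hm | hm
  · subst hm
    rw [(h.2.2.1 (x 0) (x 0)).mpr rfl] at hends
    exact absurd hends (not_top_lt)
  · exact logScale_subsequence_aux ℓ Δ h n n₀ hn m x hchain (m - 0) 0 rfl hm hends
end

section
/- Let ℓ be a log-scale on X with constant Δ, and suppose α > 0 and C ∈ (0,1) satisfy d_n(x,y) ≥ C·e^{α(n − ℓ(x,y))} for all x,y and n (where d_n is the graph distance in Γ_n). Then for every β with 0 < β < α, the function d_β(x,y) = inf over chains x = x_0, …, x_m = y of Σ_{i=1}^m e^{−β·ℓ(x_{i-1},x_i)} is a metric on X, and there is a constant C₂ > 0 with C₂·e^{−β·ℓ(x,y)} ≤ d_β(x,y) ≤ e^{−β·ℓ(x,y)} for all x ≠ y. In particular d_β is a metric associated with ℓ of exponent β. -/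
/-- The weight `e^{−β·ℓ(u,v)}`, interpreted as `0` when `ℓ(u,v) = ∞`. -/
noncomputable def chainWeight {X : Type*} (ℓ : X → X → EReal) (β : ℝ) (u v : X) : ℝ :=
  if ℓ u v = ⊤ then 0 else Real.exp (-β * (ℓ u v).toReal)

/-- `d_β(x,y)`: the infimum over chains `x = x_0, …, x_m = y` of
`Σ_{i=1}^m e^{−β·ℓ(x_{i−1}, x_i)}`. -/
noncomputable def dBeta {X : Type*} (ℓ : X → X → EReal) (β : ℝ) (x y : X) : ℝ :=
  sInf {s : ℝ | ∃ (m : ℕ) (c : ℕ → X), c 0 = x ∧ c m = y ∧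
    s = ∑ i ∈ Finset.range m, chainWeight ℓ β (c i) (c (i + 1))}

private lemma ereal_lt_sub {w : EReal} {r d : ℝ} (h : ((r + d : ℝ) : EReal) < w) :
    (r : EReal) < w - (d : EReal) := by
  induction w using EReal.rec with
  | bot => exact absurd h (by simp)
  | coe a =>
      have h' : r + d < a := by exact_mod_cast h
      rw [← EReal.coe_sub]
      exact_mod_cast by linarith
  | top => rw [EReal.top_sub_coe]; exact EReal.coe_lt_top r

private lemma chainWeight_nonneg {X : Type*} (ℓ : X → X → EReal) (β : ℝ) (u v : X) :
    0 ≤ chainWeight ℓ β u v := by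
  unfold chainWeight; split
  · exact le_refl 0
  · exact (Real.exp_pos _).le

private lemma chainWeight_symm {X : Type*} {ℓ : X → X → EReal}
    (hsymm : ∀ x y, ℓ x y = ℓ y x) (β : ℝ) (u v : X) :
    chainWeight ℓ β u v = chainWeight ℓ β v u := by
  unfold chainWeight; rw [hsymm u v]

def chainSet {X : Type*} (ℓ : X → X → EReal) (β : ℝ) (x y : X) : Set ℝ :=
  {s : ℝ | ∃ (m : ℕ) (c : ℕ → X), c 0 = x ∧ c m = y ∧
    s = ∑ i ∈ Finset.range m, chainWeight ℓ β (c i) (c (i + 1))}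

private lemma single_mem_chainSet {X : Type*} (ℓ : X → X → EReal) (β : ℝ) (x y : X) :
    chainWeight ℓ β x y ∈ chainSet ℓ β x y := by
  refine ⟨1, fun i => if i = 0 then x else y, by simp, by simp, ?_⟩
  simp

private lemma chainSet_nonempty {X : Type*} (ℓ : X → X → EReal) (β : ℝ) (x y : X) :
    (chainSet ℓ β x y).Nonempty := ⟨_, single_mem_chainSet ℓ β x y⟩

private lemma chainSet_nonneg {X : Type*} (ℓ : X → X → EReal) (β : ℝ) (x y : X) :
    ∀ a ∈ chainSet ℓ β x y, (0:ℝ) ≤ a := by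
  rintro a ⟨m, c, -, -, rfl⟩
  exact Finset.sum_nonneg fun i _ => chainWeight_nonneg ℓ β _ _

private lemma chainSet_bddBelow {X : Type*} (ℓ : X → X → EReal) (β : ℝ) (x y : X) :
    BddBelow (chainSet ℓ β x y) := ⟨0, fun a ha => chainSet_nonneg ℓ β x y a ha⟩

private lemma reverse_mem_chainSet {X : Type*} {ℓ : X → X → EReal}
    (hsymm : ∀ x y, ℓ x y = ℓ y x) (β : ℝ) {x y : X} {a : ℝ}
    (ha : a ∈ chainSet ℓ β x y) : a ∈ chainSet ℓ β y x := by
  obtain ⟨m, c, hc0, hcm, rfl⟩ := ha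
  refine ⟨m, fun i => c (m - i), by simp [hcm], by simp [hc0], ?_⟩
  rw [← Finset.sum_range_reflect (fun j => chainWeight ℓ β (c j) (c (j + 1))) m]
  refine Finset.sum_congr rfl ?_
  intro i hi
  rw [Finset.mem_range] at hi
  have e1 : m - (i + 1) = m - 1 - i := by omega
  have e2 : m - 1 - i + 1 = m - i := by omega
  simp only []
  rw [chainWeight_symm hsymm, e2, ← e1]

private lemma concat_mem_chainSet {X : Type*} (ℓ : X → X → EReal) (β : ℝ) {x y z : X} {a b : ℝ}
    (ha : a ∈ chainSet ℓ β x y) (hb : b ∈ chainSet ℓ β y z) : a + b ∈ chainSet ℓ β x z := by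
  obtain ⟨m₁, c₁, h10, h1m, rfl⟩ := ha
  obtain ⟨m₂, c₂, h20, h2m, rfl⟩ := hb
  refine ⟨m₁ + m₂, fun i => if i < m₁ then c₁ i else c₂ (i - m₁), ?_, ?_, ?_⟩
  · by_cases h : 0 < m₁
    · simp [h, h10]
    · have hm0 : m₁ = 0 := by omega
      simp only [hm0] at h1m ⊢
      simp [h20, ← h10, h1m]
  · have h : ¬ (m₁ + m₂ < m₁) := by omega
    simp [h, h2m]
  · rw [Finset.range_eq_Ico (a := m₁ + m₂), ← Finset.sum_Ico_consecutive _ (Nat.zero_le m₁) (Nat.le_add_right m₁ m₂),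
      ← Finset.range_eq_Ico, Finset.sum_Ico_eq_sum_range]
    congr 1
    · refine Finset.sum_congr rfl ?_
      intro i hi
      rw [Finset.mem_range] at hi
      have : i < m₁ := hi
      by_cases h' : i + 1 < m₁
      · simp [this, h']
      · have hi1 : i + 1 = m₁ := by omega
        have : c₂ (i + 1 - m₁) = c₁ (i + 1) := by rw [hi1]; simp [h20, h1m]
        simp [hi, h', this, h20, hi1, h1m]
    · have he : m₁ + m₂ - m₁ = m₂ := by omega
      rw [he]
      refine Finset.sum_congr rfl ?_
      intro i hi
      have h1 : ¬ (m₁ + i < m₁) := by omega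
      have h2 : ¬ (m₁ + i + 1 < m₁) := by omega
      have e1 : m₁ + i - m₁ = i := by omega
      have e2 : m₁ + i + 1 - m₁ = i + 1 := by omega
      simp [h1, h2, e1, e2]

private lemma zero_mem_chainSet {X : Type*} (ℓ : X → X → EReal) (β : ℝ) (x : X) :
    (0:ℝ) ∈ chainSet ℓ β x x := ⟨0, fun _ => x, rfl, rfl, by simp⟩

open scoped Classical in
private lemma key_lower {X : Type*} (ℓ : X → X → EReal) (Δ : ℝ)
    (hΔ : 0 < Δ)
    (htop : ∀ x y, ℓ x y = ⊤ ↔ x = y) (hbot : ∀ x y, ℓ x y ≠ ⊥)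
    (hquasi : ∀ x y z, min (ℓ x y) (ℓ y z) - (Δ : EReal) ≤ ℓ x z)
    (α C : ℝ)
    (hlower : ∀ (n : ℝ) (x y : X), x ≠ y →
      ∀ (m : ℕ) (c : ℕ → X), c 0 = x → c m = y →
        (∀ i < m, (n : EReal) ≤ ℓ (c i) (c (i + 1))) →
        C * Real.exp (α * (n - (ℓ x y).toReal)) ≤ (m : ℝ))
    (β s : ℝ) (hβ0 : 0 < β) (hs0 : 0 < s)
    (hs2 : 2 * Real.exp (β * (s + Δ)) ≤ C * Real.exp (α * s)) :
    ∀ N m, m ≤ N → ∀ x y : X, x ≠ y → ∀ c : ℕ → X, c 0 = x → c m = y →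
      Real.exp (-β * (s + 2*Δ)) * Real.exp (-β * (ℓ x y).toReal) ≤
        ∑ i ∈ Finset.range m, chainWeight ℓ β (c i) (c (i + 1)) := by
  intro N
  induction N with
  | zero =>
      intro m hm x y hxy c hc0 hcm
      have hm0 : m = 0 := by omega
      subst hm0
      exact absurd (hc0.symm.trans hcm) hxy
  | succ N IH =>
      intro m hm x y hxy c hc0 hcm
      rcases Nat.eq_zero_or_pos m with hm0 | hm1
      · subst hm0; exact absurd (hc0.symm.trans hcm) hxy
      set L := (ℓ x y).toReal with hL
      by_cases hcase : ∃ i, i < m ∧ ℓ (c i) (c (i+1)) ≤ ((L + (s + 2*Δ) : ℝ) : EReal)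
      · -- Case 1: some edge at low level; its single weight suffices.
        obtain ⟨i, him, hle⟩ := hcase
        have hnt : ℓ (c i) (c (i+1)) ≠ ⊤ := by
          intro ht
          rw [ht, top_le_iff] at hle
          exact (EReal.coe_ne_top _) hle
        have htr : (ℓ (c i) (c (i+1))).toReal ≤ L + (s + 2*Δ) := by
          have := EReal.toReal_le_toReal hle (hbot _ _) (EReal.coe_ne_top _); rwa [EReal.toReal_coe] at this
        have hw : Real.exp (-β * (s + 2*Δ)) * Real.exp (-β * L) ≤
            chainWeight ℓ β (c i) (c (i+1)) := by
          rw [chainWeight, if_neg hnt, ← Real.exp_add]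
          apply Real.exp_le_exp.mpr
          nlinarith [mul_le_mul_of_nonneg_left htr hβ0.le]
        refine le_trans hw ?_
        exact Finset.single_le_sum (f := fun j => chainWeight ℓ β (c j) (c (j+1)))
          (fun j _ => chainWeight_nonneg ℓ β _ _) (Finset.mem_range.mpr him)
      · -- Case 2: all edges at high level.
        push_neg at hcase
        have hall : ∀ i, i < m → ((L + (s + 2*Δ) : ℝ) : EReal) < ℓ (c i) (c (i+1)) := hcase
        set B : EReal := ((L + s + Δ : ℝ) : EReal) with hB
        let Q : ℕ → ℕ → Prop := fun p j => p < j ∧ j ≤ m ∧ ℓ (c p) (c j) ≤ B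
        haveI hdec : ∀ p, DecidablePred (Q p) := fun p j => Classical.propDecidable _
        haveI hdec2 : ∀ p, Decidable (∃ j, Q p j) := fun p => Classical.propDecidable _
        have hQdef : ∀ p j, Q p j ↔ (p < j ∧ j ≤ m ∧ ℓ (c p) (c j) ≤ B) := fun p j => Iff.rfl
        let g : ℕ → ℕ := fun q => Nat.rec 0 (fun _ p =>
          if h : ∃ j, Q p j then Nat.find h else m) q
        have hg0 : g 0 = 0 := rfl
        have hgs : ∀ q, g (q+1) =
            if h : ∃ j, Q (g q) j then Nat.find h else m :=
          fun q => rfl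
        have hgle : ∀ q, g (q+1) ≤ m := by
          intro q; rw [hgs]; split
          · next h => exact (Nat.find_spec h).2.1
          · exact le_rfl
        have hgm : ∀ q, g q ≤ m := by
          intro q; cases q with
          | zero => rw [hg0]; omega
          | succ q => exact hgle q
        have hglt : ∀ q, g q < m → g q < g (q+1) := by
          intro q hq; rw [hgs]; split
          · next h => exact (Nat.find_spec h).1
          · exact hq
        have hgstay : ∀ q, g q = m → g (q+1) = m := by
          intro q hq; rw [hgs]; split
          · next h => have := Nat.find_spec h; omega
          · rfl
        have hmono : ∀ q, g q ≤ g (q+1) := by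
          intro q
          rcases eq_or_lt_of_le (hgm q) with hq | hq
          · rw [hgstay q hq, hq]
          · exact (hglt q hq).le
        have hex : ∃ q, g q = m := by
          have hmin : ∀ q, min q m ≤ g q := by
            intro q; induction q with
            | zero => simp
            | succ q ih =>
                rcases eq_or_lt_of_le (hgm q) with hq | hq
                · rw [hgstay q hq]; omega
                · have := hglt q hq; omega
          exact ⟨m, le_antisymm (hgm m) (by have := hmin m; omega)⟩
        set P := @Nat.find (fun q => g q = m) (fun q => Classical.propDecidable _) hex with hPdef
        have hgP : g P = m := @Nat.find_spec (fun q => g q = m) (fun q => Classical.propDecidable _) hex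
        have hPlt : ∀ q, q < P → g q < m :=
          fun q hq => lt_of_le_of_ne (hgm q)
            (@Nat.find_min (fun q => g q = m) (fun q => Classical.propDecidable _) hex q hq)
        -- every coarse edge is above level L + s
        have hedge : ∀ q, q < P → ((L + s : ℝ) : EReal) < ℓ (c (g q)) (c (g (q+1))) := by
          intro q hq
          have hqm : g q < m := hPlt q hq
          rw [hgs]
          split
          · next hfind =>
              obtain ⟨h1, h2, h3⟩ := (hQdef _ _).mp (Nat.find_spec hfind)
              rcases eq_or_lt_of_le (Nat.succ_le_of_lt h1) with hj | hj
              · exfalso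
                have hj2 : Nat.find hfind = g q + 1 := by omega
                rw [hj2] at h3
                have hlt : ((L + (s + 2*Δ) : ℝ) : EReal) < B :=
                  lt_of_lt_of_le (hall (g q) hqm) h3
                rw [hB] at hlt
                have := EReal.coe_lt_coe_iff.mp hlt
                linarith
              · have hk1 : g q < Nat.find hfind - 1 := by omega
                have hk2 : Nat.find hfind - 1 < Nat.find hfind := by omega
                have hmin := Nat.find_min hfind hk2
                have hB1 : B < ℓ (c (g q)) (c (Nat.find hfind - 1)) := by
                  by_contra hcon
                  push_neg at hcon
                  exact hmin ((hQdef _ _).mpr ⟨hk1, by omega, hcon⟩)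
                have hB2 := hall (Nat.find hfind - 1) (by omega)
                have hj1 : Nat.find hfind - 1 + 1 = Nat.find hfind := by omega
                rw [hj1] at hB2
                have hmin' : (((L + s) + Δ : ℝ) : EReal) <
                    min (ℓ (c (g q)) (c (Nat.find hfind - 1)))
                        (ℓ (c (Nat.find hfind - 1)) (c (Nat.find hfind))) := by
                  apply lt_min
                  · rw [show ((L + s) + Δ : ℝ) = (L + s + Δ : ℝ) by ring, ← hB]; exact hB1
                  · refine lt_trans ?_ hB2
                    exact EReal.coe_lt_coe_iff.mpr (by linarith)
                have hsub := ereal_lt_sub hmin'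
                exact lt_of_lt_of_le hsub (hquasi _ _ _)
          · next hfind =>
              have hlast' : ¬ Q (g q) m := fun hQ => hfind ⟨m, hQ⟩
              rw [hQdef] at hlast'
              push_neg at hlast'
              have hlast := hlast' hqm le_rfl
              refine lt_trans ?_ hlast
              rw [hB]
              exact EReal.coe_lt_coe_iff.mpr (by linarith)
        -- apply hlower to the coarse chain
        have hPbig : C * Real.exp (α * s) ≤ (P : ℝ) := by
          have happ := hlower (L + s) x y hxy P (fun q => c (g q))
            (by simp [hg0, hc0]) (by simp [hgP, hcm])
            (fun q hq => (hedge q hq).le)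
          rw [← hL, show L + s - L = s by ring] at happ
          exact happ
        have hexp1 : (1:ℝ) ≤ Real.exp (β * (s + Δ)) :=
          Real.one_le_exp (by positivity)
        have hP2 : Real.exp (β * (s + Δ)) ≤ (P:ℝ) - 1 := by linarith
        have hP1 : 1 ≤ P := by
          by_contra hcon
          push_neg at hcon
          interval_cases P
          · simp at hP2; nlinarith [Real.exp_pos (β * (s + Δ))]
        -- block decomposition
        have hblock : ∀ q, q < P - 1 →
            Real.exp (-β * (s + 2*Δ)) * Real.exp (-β * (L + s + Δ)) ≤
              ∑ i ∈ Finset.Ico (g q) (g (q+1)), chainWeight ℓ β (c i) (c (i+1)) := by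
          intro q hq
          have hq1 : q + 1 < P := by omega
          have hlt : g (q+1) < m := hPlt _ hq1
          have hfind : ∃ j, Q (g q) j := by
            by_contra hcon
            have h' := hgs q
            rw [dif_neg hcon] at h'
            omega
          have hval : g (q+1) = Nat.find hfind := by rw [hgs, dif_pos hfind]
          obtain ⟨h1, h2, h3⟩ := (hQdef _ _).mp (Nat.find_spec hfind)
          rw [← hval] at h1 h2 h3
          have hneq : c (g q) ≠ c (g (q+1)) := by
            intro hEq
            rw [(htop _ _).mpr hEq, top_le_iff, hB] at h3
            exact (EReal.coe_ne_top _) h3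
          have hsub := IH (g (q+1) - g q) (by omega) (c (g q)) (c (g (q+1))) hneq
            (fun i => c (g q + i)) rfl
            (by show c (g q + (g (q+1) - g q)) = c (g (q+1)); congr 1; omega)
          have hsum_eq : ∑ i ∈ Finset.range (g (q+1) - g q),
              chainWeight ℓ β (c (g q + i)) (c (g q + i + 1)) =
              ∑ i ∈ Finset.Ico (g q) (g (q+1)), chainWeight ℓ β (c i) (c (i+1)) := by
            rw [Finset.sum_Ico_eq_sum_range]
          have hsub' : Real.exp (-β * (s + 2*Δ)) *
              Real.exp (-β * (ℓ (c (g q)) (c (g (q+1)))).toReal) ≤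
              ∑ i ∈ Finset.Ico (g q) (g (q+1)), chainWeight ℓ β (c i) (c (i+1)) := by
            rw [← hsum_eq]
            refine le_trans (le_of_eq rfl) (le_trans hsub (le_of_eq ?_))
            refine Finset.sum_congr rfl ?_
            intro i _
            show chainWeight ℓ β (c (g q + i)) (c (g q + (i + 1))) =
              chainWeight ℓ β (c (g q + i)) (c (g q + i + 1))
            rw [← Nat.add_assoc]
          refine le_trans ?_ hsub'
          have ht : (ℓ (c (g q)) (c (g (q+1)))).toReal ≤ L + s + Δ := by
            rw [hB] at h3
            have := EReal.toReal_le_toReal h3 (hbot _ _) (EReal.coe_ne_top _); rwa [EReal.toReal_coe] at this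
          have : Real.exp (-β * (L + s + Δ)) ≤
              Real.exp (-β * (ℓ (c (g q)) (c (g (q+1)))).toReal) := by
            apply Real.exp_le_exp.mpr
            nlinarith [mul_le_mul_of_nonneg_left ht hβ0.le]
          nlinarith [Real.exp_pos (-β * (s + 2*Δ))]
        -- assemble
        have hsplit : ∀ Q, ∑ i ∈ Finset.range (g Q), chainWeight ℓ β (c i) (c (i+1)) =
            ∑ q ∈ Finset.range Q, ∑ i ∈ Finset.Ico (g q) (g (q+1)),
              chainWeight ℓ β (c i) (c (i+1)) := by
          intro Q
          induction Q with
          | zero => simp [hg0]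
          | succ Q ih =>
              have hcons := Finset.sum_Ico_consecutive
                (fun i => chainWeight ℓ β (c i) (c (i+1)))
                (Nat.zero_le (g Q)) (hmono Q)
              rw [← Finset.range_eq_Ico, ← Finset.range_eq_Ico] at hcons
              rw [Finset.sum_range_succ, ← ih, ← hcons]
        have hpre : ∑ i ∈ Finset.range (g (P-1)), chainWeight ℓ β (c i) (c (i+1)) ≤
            ∑ i ∈ Finset.range m, chainWeight ℓ β (c i) (c (i+1)) :=
          Finset.sum_le_sum_of_subset_of_nonneg
            (Finset.range_subset_range.mpr (hgm (P-1)))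
            (fun i _ _ => chainWeight_nonneg ℓ β _ _)
        have hcount : ((P-1 : ℕ) : ℝ) *
            (Real.exp (-β * (s + 2*Δ)) * Real.exp (-β * (L + s + Δ))) ≤
            ∑ q ∈ Finset.range (P-1), ∑ i ∈ Finset.Ico (g q) (g (q+1)),
              chainWeight ℓ β (c i) (c (i+1)) := by
          have := Finset.card_nsmul_le_sum (Finset.range (P-1))
            (fun q => ∑ i ∈ Finset.Ico (g q) (g (q+1)), chainWeight ℓ β (c i) (c (i+1)))
            (Real.exp (-β * (s + 2*Δ)) * Real.exp (-β * (L + s + Δ)))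
            (fun q hq => hblock q (Finset.mem_range.mp hq))
          rwa [Finset.card_range, nsmul_eq_mul] at this
        have hcast : ((P-1 : ℕ) : ℝ) = (P : ℝ) - 1 := by
          rw [Nat.cast_sub hP1, Nat.cast_one]
        have hkey : Real.exp (β * (s + Δ)) * Real.exp (-β * (L + s + Δ)) =
            Real.exp (-β * L) := by
          rw [← Real.exp_add]; congr 1; ring
        have hfinal : Real.exp (-β * (s + 2*Δ)) * Real.exp (-β * L) ≤
            ((P-1 : ℕ) : ℝ) *
            (Real.exp (-β * (s + 2*Δ)) * Real.exp (-β * (L + s + Δ))) := by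
          rw [hcast, ← hkey]
          have hA := Real.exp_pos (-β * (s + 2*Δ))
          have hX := Real.exp_pos (-β * (L + s + Δ))
          nlinarith [mul_le_mul_of_nonneg_right hP2 (mul_pos hA hX).le]
        calc Real.exp (-β * (s + 2*Δ)) * Real.exp (-β * L)
            ≤ _ := hfinal
          _ ≤ _ := hcount
          _ = ∑ i ∈ Finset.range (g (P-1)), chainWeight ℓ β (c i) (c (i+1)) :=
              (hsplit (P-1)).symm
          _ ≤ _ := hpre

/-- If `α` is a lower exponent of the log-scale `ℓ` (with constant `C ∈ (0,1)`),
then for every `0 < β < α` the chain-infimum `d_β` is a metric on `X` satisfying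
`C₂·e^{−β·ℓ(x,y)} ≤ d_β(x,y) ≤ e^{−β·ℓ(x,y)}` for all `x ≠ y`; in particular it
is a metric associated with `ℓ` of exponent `β`. -/
theorem dBeta_is_assoc_metric {X : Type*} (ℓ : X → X → EReal) (Δ : ℝ)
    (h : IsLogScale ℓ Δ) (α C : ℝ) (hα : 0 < α) (hC0 : 0 < C) (hC1 : C < 1)
    (hlower : ∀ (n : ℝ) (x y : X), x ≠ y →
      ∀ (m : ℕ) (c : ℕ → X), c 0 = x → c m = y →
        (∀ i < m, (n : EReal) ≤ ℓ (c i) (c (i + 1))) →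
        C * Real.exp (α * (n - (ℓ x y).toReal)) ≤ (m : ℝ))
    (β : ℝ) (hβ0 : 0 < β) (hβα : β < α) :
    (∀ x y : X, dBeta ℓ β x y = dBeta ℓ β y x) ∧
    (∀ x y z : X, dBeta ℓ β x z ≤ dBeta ℓ β x y + dBeta ℓ β y z) ∧
    (∀ x : X, dBeta ℓ β x x = 0) ∧
    (∀ x y : X, x ≠ y → 0 < dBeta ℓ β x y) ∧
    ∃ C₂ > (0 : ℝ), ∀ x y : X, x ≠ y →
      C₂ * Real.exp (-β * (ℓ x y).toReal) ≤ dBeta ℓ β x y ∧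
      dBeta ℓ β x y ≤ Real.exp (-β * (ℓ x y).toReal) := by
  obtain ⟨hΔ, hsymm, htop, hbot, hquasi⟩ := h
  have hd : ∀ x y : X, dBeta ℓ β x y = sInf (chainSet ℓ β x y) := fun x y => rfl
  have hbdd := fun x y : X => chainSet_bddBelow ℓ β x y
  have hne := fun x y : X => chainSet_nonempty ℓ β x y
  have hαβ : 0 < α - β := by linarith
  obtain ⟨s, hs0, hs2⟩ : ∃ s : ℝ, 0 < s ∧
      2 * Real.exp (β * (s + Δ)) ≤ C * Real.exp (α * s) := by
    refine ⟨(Real.log 2 + β * Δ - Real.log C) / (α - β) + 1, ?_, ?_⟩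
    · have h2 : 0 < Real.log 2 := Real.log_pos one_lt_two
      have hC : Real.log C < 0 := Real.log_neg hC0 hC1
      have hβΔ : 0 < β * Δ := mul_pos hβ0 hΔ
      have : 0 < (Real.log 2 + β * Δ - Real.log C) / (α - β) := div_pos (by linarith) hαβ
      linarith
    · set t := (Real.log 2 + β * Δ - Real.log C) / (α - β) + 1 with ht
      rw [show (2:ℝ) * Real.exp (β * (t + Δ)) = Real.exp (Real.log 2 + β * (t + Δ)) by
            rw [Real.exp_add, Real.exp_log two_pos],
          show C * Real.exp (α * t) = Real.exp (Real.log C + α * t) by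
            rw [Real.exp_add, Real.exp_log hC0]]
      apply Real.exp_le_exp.mpr
      have hexp : (α - β) * t = (Real.log 2 + β * Δ - Real.log C) + (α - β) := by
        rw [ht, mul_add, mul_one, mul_div_cancel₀ _ hαβ.ne']
      nlinarith [hexp]
  set C₂ := Real.exp (-β * (s + 2*Δ)) with hC₂def
  have hC₂pos : 0 < C₂ := Real.exp_pos _
  have key := key_lower ℓ Δ hΔ htop hbot hquasi α C hlower β s hβ0 hs0 hs2
  have hlow : ∀ x y : X, x ≠ y →
      C₂ * Real.exp (-β * (ℓ x y).toReal) ≤ dBeta ℓ β x y := by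
    intro x y hxy
    rw [hd]
    apply le_csInf (hne x y)
    rintro b ⟨m, c, hc0, hcm, rfl⟩
    exact key m m le_rfl x y hxy c hc0 hcm
  have hupper : ∀ x y : X, x ≠ y →
      dBeta ℓ β x y ≤ Real.exp (-β * (ℓ x y).toReal) := by
    intro x y hxy
    rw [hd]
    have hW : chainWeight ℓ β x y = Real.exp (-β * (ℓ x y).toReal) := by
      rw [chainWeight, if_neg (fun ht => hxy ((htop x y).mp ht))]
    calc sInf (chainSet ℓ β x y) ≤ chainWeight ℓ β x y :=
          csInf_le (hbdd x y) (single_mem_chainSet ℓ β x y)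
      _ = _ := hW
  refine ⟨?_, ?_, ?_, ?_, C₂, hC₂pos, fun x y hxy => ⟨hlow x y hxy, hupper x y hxy⟩⟩
  · intro x y
    rw [hd, hd]
    exact le_antisymm
      (csInf_le_csInf (hbdd x y) (hne y x) (fun a ha => reverse_mem_chainSet hsymm β ha))
      (csInf_le_csInf (hbdd y x) (hne x y) (fun a ha => reverse_mem_chainSet hsymm β ha))
  · intro x y z
    rw [hd, hd, hd]
    have h1 : ∀ b ∈ chainSet ℓ β y z,
        sInf (chainSet ℓ β x z) ≤ sInf (chainSet ℓ β x y) + b := by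
      intro b hb
      have h2 : sInf (chainSet ℓ β x z) - b ≤ sInf (chainSet ℓ β x y) := by
        apply le_csInf (hne x y)
        intro a ha
        have := csInf_le (hbdd x z) (concat_mem_chainSet ℓ β ha hb)
        linarith
      linarith
    have h3 : sInf (chainSet ℓ β x z) - sInf (chainSet ℓ β x y) ≤ sInf (chainSet ℓ β y z) := by
      apply le_csInf (hne y z)
      intro b hb
      linarith [h1 b hb]
    linarith
  · intro x
    rw [hd]
    exact le_antisymm (csInf_le (hbdd x x) (zero_mem_chainSet ℓ β x))
      (le_csInf (hne x x) (chainSet_nonneg ℓ β x x))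
  · intro x y hxy
    exact lt_of_lt_of_le (mul_pos hC₂pos (Real.exp_pos _)) (hlow x y hxy)
end

section
/- If d is a metric on a set X associated with a log-scale ℓ with exponent α (i.e., K⁻¹ e^{−αℓ(x,y)} ≤ d(x,y) ≤ K e^{−αℓ(x,y)} for some K > 1), then α is a lower exponent of ℓ: there exists C > 0 such that d_n(x,y) ≥ C·e^{α(n − ℓ(x,y))} for all x ≠ y in X and all n, where d_n is the graph distance of the graph whose edges are pairs with ℓ-value ≥ n. -/
/-- `e^{−α·t}` for `t ∈ ℝ ∪ {∞}`, interpreted as `0` when `t = ∞`. -/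
noncomputable def expScale (α : ℝ) (t : EReal) : ℝ :=
  if t = ⊤ then 0 else Real.exp (-α * t.toReal)

lemma chain_sum {X : Type*} (d : X → X → ℝ) (hzero : ∀ x y, d x y = 0 ↔ x = y)
    (htri : ∀ x y z, d x z ≤ d x y + d y z) (c : ℕ → X) :
    ∀ m : ℕ, d (c 0) (c m) ≤ ∑ i ∈ Finset.range m, d (c i) (c (i + 1)) := by
  intro m
  induction m with
  | zero => simp [(hzero _ _).mpr rfl]
  | succ k ih =>
      rw [Finset.sum_range_succ]
      exact le_trans (htri (c 0) (c k) (c (k+1))) (by linarith)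

/-- If `d` is a metric on `X` associated with the log-scale `ℓ` with exponent `α`,
then `α` is a lower exponent of `ℓ`: there is `C > 0` with
`d_n(x,y) ≥ C·e^{α(n − ℓ(x,y))}` for all `x ≠ y` and all `n` (stated as a bound on
the length of every chain with consecutive `ℓ`-values `≥ n`). -/
theorem assocMetric_lowerExponent {X : Type*} (ℓ : X → X → EReal) (Δ : ℝ)
    (h : IsLogScale ℓ Δ) (d : X → X → ℝ) (α K : ℝ) (hα : 0 < α) (hK : 1 < K)
    (hsymm : ∀ x y, d x y = d y x)
    (htri : ∀ x y z, d x z ≤ d x y + d y z)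
    (hzero : ∀ x y, d x y = 0 ↔ x = y)
    (hassoc : ∀ x y, K⁻¹ * expScale α (ℓ x y) ≤ d x y ∧ d x y ≤ K * expScale α (ℓ x y)) :
    ∃ C > (0 : ℝ), ∀ (n : ℝ) (x y : X), x ≠ y →
      ∀ (m : ℕ) (c : ℕ → X), c 0 = x → c m = y →
        (∀ i < m, (n : EReal) ≤ ℓ (c i) (c (i + 1))) →
        C * Real.exp (α * (n - (ℓ x y).toReal)) ≤ (m : ℝ) := by
  have hK0 : (0:ℝ) < K := lt_trans one_pos hK
  refine ⟨(K*K)⁻¹, by positivity, ?_⟩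
  intro n x y hxy m c hc0 hcm hedge
  -- each edge has d ≤ K * exp(-α n)
  have hedged : ∀ i < m, d (c i) (c (i+1)) ≤ K * Real.exp (-α * n) := by
    intro i hi
    refine le_trans (hassoc _ _).2 ?_
    have : expScale α (ℓ (c i) (c (i+1))) ≤ Real.exp (-α * n) := by
      unfold expScale
      split
      · positivity
      · rename_i ht
        apply Real.exp_le_exp.mpr
        have hb := h.2.2.2.1 (c i) (c (i+1))
        have hle : n ≤ (ℓ (c i) (c (i+1))).toReal := by
          have := hedge i hi
          have : ((n:ℝ):EReal).toReal ≤ (ℓ (c i) (c (i+1))).toReal :=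
            EReal.toReal_le_toReal this (EReal.coe_ne_bot n) ht
          simpa using this
        nlinarith
    nlinarith [Real.exp_pos (-α * n)]
  -- d x y lower bound
  have hne : ℓ x y ≠ ⊤ := fun ht => hxy ((h.2.2.1 x y).1 ht)
  have hlow : K⁻¹ * Real.exp (-α * (ℓ x y).toReal) ≤ d x y := by
    have := (hassoc x y).1
    rwa [expScale, if_neg hne] at this
  -- chain sum
  have hsum : d x y ≤ (m:ℝ) * (K * Real.exp (-α * n)) := by
    calc d x y = d (c 0) (c m) := by rw [hc0, hcm]
    _ ≤ ∑ i ∈ Finset.range m, d (c i) (c (i + 1)) := chain_sum d hzero htri c m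
    _ ≤ ∑ _i ∈ Finset.range m, (K * Real.exp (-α * n)) := by
        apply Finset.sum_le_sum
        intro i hi
        exact hedged i (Finset.mem_range.1 hi)
    _ = (m:ℝ) * (K * Real.exp (-α * n)) := by rw [Finset.sum_const, Finset.card_range]; ring
  have key : K⁻¹ * Real.exp (-α * (ℓ x y).toReal) ≤ (m:ℝ) * (K * Real.exp (-α * n)) :=
    le_trans hlow hsum
  have hexp : Real.exp (α * (n - (ℓ x y).toReal)) =
      Real.exp (-α * (ℓ x y).toReal) / Real.exp (-α * n) := by
    rw [← Real.exp_sub]; ring_nf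
  rw [hexp]
  have e1 := Real.exp_pos (-α * n)
  have e2 := Real.exp_pos (-α * (ℓ x y).toReal)
  rw [div_eq_mul_inv, ← mul_assoc]
  rw [← div_le_iff₀] at key
  · calc (K*K)⁻¹ * Real.exp (-α * (ℓ x y).toReal) * (Real.exp (-α * n))⁻¹
        = (K⁻¹ * Real.exp (-α * (ℓ x y).toReal)) / (K * Real.exp (-α * n)) := by
          field_simp
    _ ≤ (m:ℝ) := key
  · positivity
end

section
/- Let W be a stable leaf of a Smale space with internal log-scale ℓ₊ (the largest n₀ such that (fⁿ(y₁), fⁿ(y₂)) ∈ U for all n ≥ −n₀). Then ℓ₊ is a log-scale on W: symmetric, infinite exactly on the diagonal, and satisfying ℓ₊(x,z) ≥ min{ℓ₊(x,y), ℓ₊(y,z)} − Δ for a uniform constant Δ, given that the ambient standard log-scale ℓ is a log-scale with constant Δ and ℓ₊(fy₁, fy₂) = ℓ₊(y₁,y₂) + 1, ℓ₊ = ℓ whenever ℓ₊ > 0, and ℓ ≤ ℓ₊ always. -/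
lemma ereal_sub_nonneg_le (a : EReal) (Δ : ℝ) (hΔ : 0 ≤ Δ) : a - (Δ : EReal) ≤ a := by
  induction a using EReal.rec with
  | bot => simp
  | coe r =>
    rw [← EReal.coe_sub, EReal.coe_le_coe_iff]; linarith
  | top => simp [EReal.top_sub_coe]


/-- The internal log-scale `ℓ₊` on stable leaves of a Smale space is a log-scale:
given the stable equivalence `E` (preserved by `f`), the ambient standard
log-scale `ℓ` with constant `Δ`, and `ℓ₊` satisfying the listed properties
(symmetric on leaves, infinite exactly on the diagonal, `ℓ₊(f y₁, f y₂) = ℓ₊(y₁,y₂) + 1`,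
`ℓ₊ = ℓ` whenever `ℓ₊ > 0`, and `ℓ ≤ ℓ₊`), the weak ultrametric inequality with the
same constant `Δ` holds for `ℓ₊` on each stable leaf. -/
theorem internal_logScale_isLogScale {X : Type*} (f : X → X)
    (E : X → X → Prop) (hE : Equivalence E)
    (hEf : ∀ x y, E x y → E (f x) (f y))
    (ℓ ℓp : X → X → EReal) (Δ : ℝ) (hℓ : IsLogScale ℓ Δ)
    (hsymm : ∀ x y, E x y → ℓp x y = ℓp y x)
    (htop : ∀ x y, E x y → (ℓp x y = ⊤ ↔ x = y))
    (hbot : ∀ x y, E x y → ℓp x y ≠ ⊥)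
    (hshift : ∀ x y, E x y → ℓp (f x) (f y) = ℓp x y + 1)
    (heqpos : ∀ x y, E x y → 0 < ℓp x y → ℓp x y = ℓ x y)
    (hle : ∀ x y, E x y → ℓ x y ≤ ℓp x y) :
    ∀ x y z : X, E x y → E y z →
      min (ℓp x y) (ℓp y z) - (Δ : EReal) ≤ ℓp x z := by
  obtain ⟨hΔ, _, _, hℓbot, hult⟩ := hℓ
  -- iteration lemma
  have hiter : ∀ (n : ℕ) (x y : X), E x y →
      E (f^[n] x) (f^[n] y) ∧ ℓp (f^[n] x) (f^[n] y) = ℓp x y + (n : EReal) := by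
    intro n
    induction n with
    | zero => intro x y h; simpa using h
    | succ n ih =>
      intro x y h
      obtain ⟨hEn, hn⟩ := ih x y h
      constructor
      · rw [Function.iterate_succ_apply', Function.iterate_succ_apply']
        exact hEf _ _ hEn
      · rw [Function.iterate_succ_apply', Function.iterate_succ_apply',
          hshift _ _ hEn, hn]
        push_cast
        rw [add_assoc]
  intro x y z hxy hyz
  have hxz : E x z := hE.trans hxy hyz
  by_cases hxyT : ℓp x y = ⊤
  · have : x = y := (htop x y hxy).mp hxyT
    subst this
    rw [hxyT]
    simp only [le_top, min_eq_right]
    exact ereal_sub_nonneg_le _ _ hΔ.le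
  by_cases hyzT : ℓp y z = ⊤
  · have : y = z := (htop y z hyz).mp hyzT
    subst this
    rw [hyzT]
    simp only [le_top, min_eq_left]
    exact ereal_sub_nonneg_le _ _ hΔ.le
  by_cases hxzT : ℓp x z = ⊤
  · rw [hxzT]; exact le_top
  -- lift to reals
  lift ℓp x y to ℝ using ⟨hxyT, hbot x y hxy⟩ with a ha
  lift ℓp y z to ℝ using ⟨hyzT, hbot y z hyz⟩ with b hb
  lift ℓp x z to ℝ using ⟨hxzT, hbot x z hxz⟩ with c hc
  obtain ⟨n, hn⟩ := exists_nat_gt (max (-a) (-b))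
  have hna : (0:ℝ) < a + n := by
    have := (max_lt_iff.mp hn).1; linarith
  have hnb : (0:ℝ) < b + n := by
    have := (max_lt_iff.mp hn).2; linarith
  obtain ⟨hExy, hxyn⟩ := hiter n x y hxy
  obtain ⟨hEyz, hyzn⟩ := hiter n y z hyz
  obtain ⟨hExz, hxzn⟩ := hiter n x z hxz
  rw [← ha] at hxyn
  rw [← hb] at hyzn
  rw [← hc] at hxzn
  have hxyn' : ℓp (f^[n] x) (f^[n] y) = ((a + n : ℝ) : EReal) := by
    rw [hxyn]; norm_cast
  have hyzn' : ℓp (f^[n] y) (f^[n] z) = ((b + n : ℝ) : EReal) := by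
    rw [hyzn]; norm_cast
  have hxzn' : ℓp (f^[n] x) (f^[n] z) = ((c + n : ℝ) : EReal) := by
    rw [hxzn]; norm_cast
  have hposxy : (0 : EReal) < ℓp (f^[n] x) (f^[n] y) := by
    rw [hxyn']; exact_mod_cast hna
  have hposyz : (0 : EReal) < ℓp (f^[n] y) (f^[n] z) := by
    rw [hyzn']; exact_mod_cast hnb
  have h1 := heqpos _ _ hExy hposxy
  have h2 := heqpos _ _ hEyz hposyz
  have h3 := hult (f^[n] x) (f^[n] y) (f^[n] z)
  rw [← h1, ← h2, hxyn', hyzn'] at h3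
  have h4 : ℓ (f^[n] x) (f^[n] z) ≤ ((c + n : ℝ) : EReal) := by
    rw [← hxzn']; exact hle _ _ hExz
  have hmin : ∀ u v : ℝ, ((min u v : ℝ) : EReal) = min ((u:ℝ):EReal) ((v:ℝ):EReal) :=
    fun u v => (EReal.coe_strictMono.monotone.map_min)
  have h5 : (((min (a+n) (b+n) - Δ : ℝ)) : EReal) ≤ ((c + n : ℝ) : EReal) := by
    calc (((min (a+n) (b+n) - Δ : ℝ)) : EReal)
        = min (((a+n:ℝ)):EReal) ((b+n:ℝ):EReal) - (Δ : EReal) := by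
          rw [EReal.coe_sub, hmin]
      _ ≤ ℓ (f^[n] x) (f^[n] z) := h3
      _ ≤ _ := h4
  rw [EReal.coe_le_coe_iff] at h5
  have goal : ((min a b - Δ : ℝ) : EReal) ≤ ((c : ℝ) : EReal) := by
    rw [EReal.coe_le_coe_iff]
    rcases min_cases (a+(n:ℝ)) (b+(n:ℝ)) with ⟨h6, _⟩ | ⟨h6, h7⟩ <;>
      rcases min_cases a b with ⟨h8, _⟩ | ⟨h8, h9⟩ <;> rw [h6] at h5 <;> rw [h8] <;> linarith
  rw [EReal.coe_sub, hmin] at goal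
  exact goal
end

section
/- Characterization of upper exponents via a cross-section: Fix l ∈ ℝ. A number α > 0 is a stable upper exponent of a Smale space (X, f) if and only if there exists a constant C_l > 0 such that for any stable leaf W and any x, y ∈ W with ℓ_W(x,y) ≥ l, one has d_n(x,y) ≤ C_l e^{αn} for all n ≥ 0. -/
/-- `α > 0` is a stable upper exponent: there is `C > 0` such that for every
stable leaf (equivalence class of `E`), every `x ≠ y` in it and every
`n ≥ ℓ_W(x,y)` there is a chain inside the leaf from `x` to `y` with consecutive
internal-log-scale values `≥ n` of length at most `C·e^{α(n − ℓ_W(x,y))}`, i.e.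
`d_n(x,y) ≤ C·e^{α(n − ℓ_W(x,y))}`. -/
def IsStableUpperExponent {X : Type*} (E : X → X → Prop)
    (ℓp : X → X → EReal) (α : ℝ) : Prop :=
  ∃ C > (0 : ℝ), ∀ (n : ℝ) (x y : X), E x y → x ≠ y → (ℓp x y).toReal ≤ n →
    ∃ (m : ℕ) (c : ℕ → X), c 0 = x ∧ c m = y ∧ (∀ i, E x (c i)) ∧
      (∀ i < m, (n : EReal) ≤ ℓp (c i) (c (i + 1))) ∧
      (m : ℝ) ≤ C * Real.exp (α * (n - (ℓp x y).toReal))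

/-- Characterization of stable upper exponents via a cross-section: fixing `l ∈ ℝ`,
`α > 0` is a stable upper exponent if and only if there is `C_l > 0` such that for
all `x ≠ y` in one stable leaf with `ℓ_W(x,y) ≥ l` and all `n ≥ 0` there is a chain
in the leaf with consecutive values `≥ n` of length at most `C_l·e^{αn}`. -/
theorem stableUpperExponent_iff {X : Type*} (f : X ≃ X)
    (E : X → X → Prop) (hE : Equivalence E)
    (hEf : ∀ x y, E x y → E (f x) (f y))
    (hEf' : ∀ x y, E x y → E (f.symm x) (f.symm y))
    (ℓp : X → X → EReal)
    (hsymm : ∀ x y, E x y → ℓp x y = ℓp y x)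
    (htop : ∀ x y, E x y → (ℓp x y = ⊤ ↔ x = y))
    (hbot : ∀ x y, E x y → ℓp x y ≠ ⊥)
    (hshift : ∀ x y, E x y → ℓp (f x) (f y) = ℓp x y + 1)
    (l α : ℝ) (hα : 0 < α) :
    IsStableUpperExponent E ℓp α ↔
      ∃ C > (0 : ℝ), ∀ (x y : X), E x y → x ≠ y → (l : EReal) ≤ ℓp x y →
        ∀ n : ℝ, 0 ≤ n →
          ∃ (m : ℕ) (c : ℕ → X), c 0 = x ∧ c m = y ∧ (∀ i, E x (c i)) ∧
            (∀ i < m, (n : EReal) ≤ ℓp (c i) (c (i + 1))) ∧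
            (m : ℝ) ≤ C * Real.exp (α * n) := by
  -- iterates of an equivalence cancel with iterates of its inverse
  have hinv : ∀ (e : X ≃ X) (j : ℕ) (x : X),
      (e : X → X)^[j] ((e.symm : X → X)^[j] x) = x := by
    intro e j
    induction j with
    | zero => intro x; simp
    | succ j ih =>
      intro x
      rw [Function.iterate_succ_apply', Function.iterate_succ_apply, ih (e.symm x),
        Equiv.apply_symm_apply]
  have hEiterF : ∀ (j : ℕ) (u v : X), E u v → E ((f : X → X)^[j] u) ((f : X → X)^[j] v) := by
    intro j
    induction j with
    | zero => intro u v h; simpa using h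
    | succ j ih =>
      intro u v h
      rw [Function.iterate_succ_apply', Function.iterate_succ_apply']
      exact hEf _ _ (ih u v h)
  have hEiterS : ∀ (j : ℕ) (u v : X), E u v →
      E ((f.symm : X → X)^[j] u) ((f.symm : X → X)^[j] v) := by
    intro j
    induction j with
    | zero => intro u v h; simpa using h
    | succ j ih =>
      intro u v h
      rw [Function.iterate_succ_apply', Function.iterate_succ_apply']
      exact hEf' _ _ (ih u v h)
  have hliter : ∀ (j : ℕ) (u v : X), E u v →
      ℓp ((f : X → X)^[j] u) ((f : X → X)^[j] v) = ℓp u v + ((j : ℝ) : EReal) := by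
    intro j
    induction j with
    | zero => intro u v h; simp
    | succ j ih =>
      intro u v h
      rw [Function.iterate_succ_apply', Function.iterate_succ_apply',
        hshift _ _ (hEiterF j u v h), ih u v h, add_assoc]
      congr 1
      norm_cast
  constructor
  · -- forward direction
    rintro ⟨C, hC, hup⟩
    refine ⟨C * Real.exp (α * |l|), by positivity, ?_⟩
    intro x y hxy hne hl n hn
    set L := (ℓp x y).toReal with hLdef
    have htop' : ℓp x y ≠ ⊤ := fun h => hne ((htop x y hxy).mp h)
    have hcoe : (L : EReal) = ℓp x y := EReal.coe_toReal htop' (hbot x y hxy)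
    have hLl : l ≤ L := by
      rw [← hcoe] at hl
      exact_mod_cast hl
    obtain ⟨m, c, hc0, hcm, hcE, hcv, hcb⟩ := hup (max n L) x y hxy hne (le_max_right _ _)
    refine ⟨m, c, hc0, hcm, hcE, ?_, ?_⟩
    · intro i hi
      refine le_trans ?_ (hcv i hi)
      exact_mod_cast le_max_left n L
    · calc (m : ℝ) ≤ C * Real.exp (α * (max n L - L)) := hcb
        _ ≤ C * Real.exp (α * |l|) * Real.exp (α * n) := by
            rw [mul_assoc, ← Real.exp_add]
            refine mul_le_mul_of_nonneg_left ?_ hC.le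
            refine Real.exp_le_exp.mpr ?_
            have h1 : max n L - L ≤ |l| + n := by
              rcases max_cases n L with ⟨h, h'⟩ | ⟨h, h'⟩ <;> rw [h] <;>
                nlinarith [abs_nonneg l, neg_abs_le l]
            nlinarith [mul_le_mul_of_nonneg_left h1 hα.le]
  · -- reverse direction
    rintro ⟨Cl, hCl, H⟩
    refine ⟨Cl * Real.exp (α * (|l| + 1)), by positivity, ?_⟩
    intro n x y hxy hne hLn
    set L := (ℓp x y).toReal with hLdef
    have htop' : ℓp x y ≠ ⊤ := fun h => hne ((htop x y hxy).mp h)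
    have hcoe : (L : EReal) = ℓp x y := EReal.coe_toReal htop' (hbot x y hxy)
    have main : ∀ (g h : X → X) (r : ℝ),
        (∀ u, g (h u) = u) → (∀ u, h (g u) = u) →
        (∀ u v, E u v → E (g u) (g v)) → (∀ u v, E u v → E (h u) (h v)) →
        (∀ u v, E u v → ℓp (g u) (g v) = ℓp u v + (r : EReal)) →
        l - L ≤ r → r ≤ l - L + 1 →
        ∃ (m : ℕ) (c : ℕ → X), c 0 = x ∧ c m = y ∧ (∀ i, E x (c i)) ∧
          (∀ i < m, (n : EReal) ≤ ℓp (c i) (c (i + 1))) ∧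
          (m : ℝ) ≤ Cl * Real.exp (α * (|l| + 1)) * Real.exp (α * (n - L)) := by
      intro g h r hgh hhg hEg hEh hlg hr1 hr2
      have hne' : g x ≠ g y := fun hxy' => hne (by rw [← hhg x, ← hhg y, hxy'])
      have hExy' : E (g x) (g y) := hEg x y hxy
      have hl' : (l : EReal) ≤ ℓp (g x) (g y) := by
        rw [hlg x y hxy, ← hcoe]
        have h2 : (l : ℝ) ≤ L + r := by linarith
        calc (l : EReal) ≤ ((L + r : ℝ) : EReal) := EReal.coe_le_coe_iff.mpr h2
          _ = (L : EReal) + (r : EReal) := EReal.coe_add L r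
      set n' := max (n + r) 0 with hn'def
      obtain ⟨m, c', hc0, hcm, hcE, hcv, hcb⟩ :=
        H (g x) (g y) hExy' hne' hl' n' (le_max_right _ _)
      refine ⟨m, fun i => h (c' i), ?_, ?_, ?_, ?_, ?_⟩
      · show h (c' 0) = x
        rw [hc0, hhg]
      · show h (c' m) = y
        rw [hcm, hhg]
      · intro i
        show E x (h (c' i))
        have h2 := hEh _ _ (hcE i)
        rwa [hhg] at h2
      · intro i hi
        show (n : EReal) ≤ ℓp (h (c' i)) (h (c' (i + 1)))
        have hE1 : E (c' i) (c' (i + 1)) := hE.trans (hE.symm (hcE i)) (hcE (i + 1))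
        have hE2 : E (h (c' i)) (h (c' (i + 1))) := hEh _ _ hE1
        have key : ℓp (c' i) (c' (i + 1)) = ℓp (h (c' i)) (h (c' (i + 1))) + (r : EReal) := by
          have h3 := hlg _ _ hE2
          rwa [hgh, hgh] at h3
        have hge : ((n + r : ℝ) : EReal) ≤ ℓp (h (c' i)) (h (c' (i + 1))) + (r : EReal) := by
          rw [← key]
          exact le_trans (EReal.coe_le_coe_iff.mpr (le_max_left _ _)) (hcv i hi)
        have h4 := EReal.sub_le_sub hge (le_refl (r : EReal))
        rw [EReal.add_sub_cancel_right] at h4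
        have heq : ((n + r : ℝ) : EReal) - (r : EReal) = (n : EReal) := by
          rw [show ((n + r : ℝ) : EReal) = (n : EReal) + (r : EReal) from EReal.coe_add n r,
            EReal.add_sub_cancel_right]
        rwa [heq] at h4
      · calc (m : ℝ) ≤ Cl * Real.exp (α * n') := hcb
          _ ≤ Cl * Real.exp (α * (|l| + 1)) * Real.exp (α * (n - L)) := by
              rw [mul_assoc, ← Real.exp_add]
              refine mul_le_mul_of_nonneg_left ?_ hCl.le
              refine Real.exp_le_exp.mpr ?_
              have h1 : n' ≤ (|l| + 1) + (n - L) := by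
                rcases max_cases (n + r) 0 with ⟨h2, h3⟩ | ⟨h2, h3⟩ <;> rw [hn'def, h2] <;>
                  nlinarith [abs_nonneg l, le_abs_self l]
              nlinarith [mul_le_mul_of_nonneg_left h1 hα.le]
    set k : ℤ := ⌈l - L⌉ with hk
    have hk1 : l - L ≤ (k : ℝ) := Int.le_ceil _
    have hk2 : (k : ℝ) ≤ l - L + 1 := by
      have := Int.ceil_lt_add_one (l - L)
      rw [← hk] at this
      linarith
    rcases le_or_gt 0 k with hk0 | hk0
    · set j := k.toNat with hj
      have hjk : (j : ℝ) = (k : ℝ) := by exact_mod_cast Int.toNat_of_nonneg hk0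
      refine main ((f : X → X)^[j]) ((f.symm : X → X)^[j]) (j : ℝ)
        (hinv f j) (fun u => ?_) (hEiterF j) (hEiterS j) (hliter j)
        (by rw [hjk]; exact hk1) (by rw [hjk]; exact hk2)
      have h2 := hinv f.symm j u
      simpa using h2
    · set j := (-k).toNat with hj
      have hjk : (j : ℝ) = -(k : ℝ) := by
        have : ((-k).toNat : ℤ) = -k := Int.toNat_of_nonneg (by omega)
        exact_mod_cast this
      refine main ((f.symm : X → X)^[j]) ((f : X → X)^[j]) (-(j : ℝ))
        (fun u => ?_) (hinv f j) (hEiterS j) (hEiterF j) (fun u v huv => ?_)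
        (by rw [hjk, neg_neg]; exact hk1) (by rw [hjk, neg_neg]; exact hk2)
      · have h2 := hinv f.symm j u
        simpa using h2
      · have huv' := hEiterS j u v huv
        have h2 := hliter j _ _ huv'
        rw [hinv f j u, hinv f j v] at h2
        rw [h2, EReal.coe_neg, ← sub_eq_add_neg, EReal.add_sub_cancel_right]
end

section
/- Lattice-point expansion along a hyperbolic automorphism: Let φ ∈ GL(d, ℤ) be hyperbolic, with ℝ^d = E₊ ⊕ E₋ the splitting into the contracting and expanding generalized eigenspaces of φ, and P₊ : ℝ^d → E₊ the projection. Let K = {x ∈ ℝ^d : |x_i| < 1} and let S ⊆ ℤ^d be a finite set containing all g ∈ ℤ^d with (K + g) ∩ (φ(K) ∪ φ⁻¹(K)) ≠ ∅. Then for every v ∈ E₊ there exist g₀ ∈ ℤ^d and a sequence g_i ∈ S (i ≥ 1) such that v = lim_{n→∞} P₊(φⁿ(g_n) + φ^{n−1}(g_{n−1}) + ⋯ + φ(g₁) + g₀). -/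
/-- Coercion of a lattice point of `ℤ^d` into `ℝ^d`. -/
def latCoe {d : ℕ} (g : Fin d → ℤ) : Fin d → ℝ := fun i => (g i : ℝ)

/-- Lattice-point expansion along a hyperbolic automorphism: let `φ` be a linear
automorphism of `ℝ^d` preserving the lattice `ℤ^d`, with `P` the projection onto
the contracting space `E₊` along the expanding space `E₋` (so `P² = P`, `Pφ = φP`,
`φ` contracts the range of `P` and `φ⁻¹` contracts the range of `1 − P`).
Let `S` be a finite set of lattice points containing every `g ∈ ℤ^d` with
`(K + g) ∩ (φ(K) ∪ φ⁻¹(K)) ≠ ∅`, `K` the open unit cube. Then every `v ∈ E₊` is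
the limit of `P(φⁿ(g_n) + φ^{n−1}(g_{n−1}) + ⋯ + φ(g₁) + g₀)` for some `g₀ ∈ ℤ^d`
and a sequence `g_i ∈ S` (`i ≥ 1`). -/
theorem lattice_expansion {d : ℕ}
    (φ : (Fin d → ℝ) ≃ₗ[ℝ] (Fin d → ℝ))
    (hlat : ∀ g : Fin d → ℤ, (∃ g' : Fin d → ℤ, φ (latCoe g) = latCoe g') ∧
      (∃ g' : Fin d → ℤ, φ.symm (latCoe g) = latCoe g'))
    (P : (Fin d → ℝ) →ₗ[ℝ] (Fin d → ℝ))
    (hP : P ∘ₗ P = P)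
    (hPφ : P ∘ₗ (φ : (Fin d → ℝ) →ₗ[ℝ] (Fin d → ℝ)) =
      (φ : (Fin d → ℝ) →ₗ[ℝ] (Fin d → ℝ)) ∘ₗ P)
    (C lam : ℝ) (hC : 0 < C) (hlam0 : 0 < lam) (hlam1 : lam < 1)
    (hcontr : ∀ (v : Fin d → ℝ) (n : ℕ), ‖(φ ^ (n : ℤ)) (P v)‖ ≤ C * lam ^ n * ‖P v‖)
    (hexpand : ∀ (v : Fin d → ℝ) (n : ℕ),
      ‖(φ ^ (-(n : ℤ))) (v - P v)‖ ≤ C * lam ^ n * ‖v - P v‖)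
    (S : Finset (Fin d → ℤ))
    (hS : ∀ g : Fin d → ℤ,
      (∃ x : Fin d → ℝ, (∀ i, |x i - (g i : ℝ)| < 1) ∧
        ∃ y : Fin d → ℝ, (∀ i, |y i| < 1) ∧ (φ y = x ∨ φ.symm y = x)) → g ∈ S) :
    ∀ v : Fin d → ℝ, P v = v →
      ∃ g : ℕ → (Fin d → ℤ), (∀ i : ℕ, 1 ≤ i → g i ∈ S) ∧
        Filter.Tendsto
          (fun n : ℕ => P (∑ i ∈ Finset.range (n + 1), (φ ^ (i : ℤ)) (latCoe (g i))))
          Filter.atTop (nhds v) := by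
  classical
  intro v hv
  -- zpow composition
  have zadd : ∀ (a b : ℤ) (x : Fin d → ℝ), (φ ^ (a + b)) x = (φ ^ a) ((φ ^ b) x) := by
    intro a b x; rw [zpow_add]; rfl
  -- points to approximate
  set xv : ℕ → (Fin d → ℝ) := fun n => (φ ^ (-(n : ℤ))) v with hxvdef
  set h : ℕ → (Fin d → ℤ) := fun n i => round (xv n i) with hhdef
  have hclose : ∀ (n : ℕ) (i : Fin d), |latCoe (h n) i - xv n i| ≤ 1 / 2 := by
    intro n i
    rw [abs_sub_comm]
    exact abs_sub_round (xv n i)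
  -- lattice image of φ
  choose F hF using fun g => (hlat g).1
  -- the sequence
  set g : ℕ → (Fin d → ℤ) := fun n =>
    Nat.rec (F (h 1)) (fun m _ => F (h (m + 2)) - h (m + 1)) n with hgdef
  have hg0 : g 0 = F (h 1) := rfl
  have hgs : ∀ m : ℕ, g (m + 1) = F (h (m + 2)) - h (m + 1) := fun m => rfl
  have latCoe_sub : ∀ a b : Fin d → ℤ, latCoe (a - b) = latCoe a - latCoe b := by
    intro a b; funext i; simp [latCoe]
  -- φ of xv (n+1) is xv n
  have hxv_step : ∀ n : ℕ, φ (xv (n + 1)) = xv n := by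
    intro n
    have : (-(n : ℤ)) = 1 + -((n + 1 : ℕ) : ℤ) := by push_cast; ring
    show φ (xv (n + 1)) = (φ ^ (-(n : ℤ))) v
    rw [this, zadd]
    rfl
  -- commuting of P with φ
  have hPφ' : ∀ x, P (φ x) = φ (P x) := fun x => LinearMap.congr_fun hPφ x
  have hPφn : ∀ (n : ℕ) (x), P ((φ ^ n) x) = (φ ^ n) (P x) := by
    intro n
    induction n with
    | zero => intro x; rfl
    | succ m ih =>
      intro x
      have h1 : (φ ^ (m + 1)) x = (φ ^ m) (φ x) := by rw [pow_succ]; rfl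
      have h2 : (φ ^ (m + 1)) (P x) = (φ ^ m) (φ (P x)) := by rw [pow_succ]; rfl
      rw [h1, h2, ih, hPφ']
  have hPφz : ∀ (n : ℕ) (x), P ((φ ^ (n : ℤ)) x) = (φ ^ (n : ℤ)) (P x) := by
    intro n x
    rw [zpow_natCast]
    exact hPφn n x
  -- P fixes xv n
  have hPxv : ∀ n : ℕ, P (xv n) = xv n := by
    intro n
    have hinj : Function.Injective (φ ^ (n : ℤ)) := (φ ^ (n : ℤ)).injective
    apply hinj
    have hcancel : ∀ x, (φ ^ (n : ℤ)) ((φ ^ (-(n : ℤ))) x) = x := by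
      intro x
      rw [← zadd, add_neg_cancel]
      rfl
    rw [← hPφz]
    show P ((φ ^ (n : ℤ)) ((φ ^ (-(n : ℤ))) v)) = (φ ^ (n : ℤ)) ((φ ^ (-(n : ℤ))) v)
    rw [hcancel, hv]
  -- telescoping sum
  have hsum : ∀ n : ℕ,
      ∑ i ∈ Finset.range (n + 1), (φ ^ (i : ℤ)) (latCoe (g i))
        = (φ ^ ((n + 1 : ℕ) : ℤ)) (latCoe (h (n + 1))) := by
    intro n
    induction n with
    | zero =>
      rw [Finset.sum_range_one]
      have h1 : ((1 : ℕ) : ℤ) = 1 + 0 := by ring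
      rw [hg0, h1, zadd]
      show latCoe (F (h 1)) = φ ((φ ^ (0 : ℤ)) (latCoe (h 1)))
      rw [← hF (h 1)]
      rfl
    | succ m ih =>
      rw [Finset.sum_range_succ, ih, hgs, latCoe_sub, map_sub, ← hF (h (m + 2))]
      have h1 : ((m + 2 : ℕ) : ℤ) = ((m + 1 : ℕ) : ℤ) + 1 := by push_cast; ring
      have h2 : (φ ^ ((m + 2 : ℕ) : ℤ)) (latCoe (h (m + 2)))
          = (φ ^ ((m + 1 : ℕ) : ℤ)) ((φ ^ (1 : ℤ)) (latCoe (h (m + 2)))) := by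
        rw [h1, zadd]
      rw [h2]
      have h3 : (φ ^ (1 : ℤ)) (latCoe (h (m + 2))) = φ (latCoe (h (m + 2))) := rfl
      rw [h3]
      exact add_sub_cancel _ _
  -- membership in S
  have hmem : ∀ i : ℕ, 1 ≤ i → g i ∈ S := by
    intro i hi
    obtain ⟨m, rfl⟩ := Nat.exists_eq_add_of_le hi
    rw [add_comm]
    apply hS
    refine ⟨latCoe (F (h (m + 2))) - xv (m + 1), ?_, latCoe (h (m + 2)) - xv (m + 2), ?_, ?_⟩
    · intro j
      have : (latCoe (F (h (m + 2))) - xv (m + 1)) j - ((g (m + 1)) j : ℝ)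
          = latCoe (h (m + 1)) j - xv (m + 1) j := by
        rw [hgs]
        simp only [latCoe, Pi.sub_apply, hgs, Int.cast_sub]
        ring
      rw [this]
      exact lt_of_le_of_lt (hclose (m + 1) j) (by norm_num)
    · intro j
      have : (latCoe (h (m + 2)) - xv (m + 2)) j = latCoe (h (m + 2)) j - xv (m + 2) j := rfl
      rw [this]
      exact lt_of_le_of_lt (hclose (m + 2) j) (by norm_num)
    · left
      rw [map_sub, hxv_step, hF]
  refine ⟨g, hmem, ?_⟩
  -- norm bound for the error
  set Pc : (Fin d → ℝ) →L[ℝ] (Fin d → ℝ) := LinearMap.toContinuousLinearMap P with hPc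
  have hPcP : ∀ x, Pc x = P x := fun x => rfl
  set e : ℕ → (Fin d → ℝ) := fun n => latCoe (h (n + 1)) - xv (n + 1) with hedef
  have he_norm : ∀ n, ‖e n‖ ≤ 1 / 2 := by
    intro n
    refine (pi_norm_le_iff_of_nonneg (by norm_num)).2 fun j => ?_
    exact hclose (n + 1) j
  have hkey : ∀ n : ℕ,
      P (∑ i ∈ Finset.range (n + 1), (φ ^ (i : ℤ)) (latCoe (g i))) - v
        = (φ ^ ((n + 1 : ℕ) : ℤ)) (P (e n)) := by
    intro n
    rw [hsum n, hPφz]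
    have h1 : P (e n) = P (latCoe (h (n + 1))) - xv (n + 1) := by
      have h0 : P (latCoe (h (n + 1)) - xv (n + 1))
          = P (latCoe (h (n + 1))) - P (xv (n + 1)) := map_sub P _ _
      rw [hPxv] at h0
      exact h0
    have h2 : P (latCoe (h (n + 1))) = xv (n + 1) + P (e n) := by
      rw [h1]
      exact (add_sub_cancel _ _).symm
    rw [h2, map_add]
    have hcancel : (φ ^ ((n + 1 : ℕ) : ℤ)) (xv (n + 1)) = v := by
      show (φ ^ ((n + 1 : ℕ) : ℤ)) ((φ ^ (-((n + 1 : ℕ) : ℤ))) v) = v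
      rw [← zadd, add_neg_cancel]
      rfl
    rw [hcancel]
    exact add_sub_cancel_left v _
  have hbound : ∀ n : ℕ,
      ‖P (∑ i ∈ Finset.range (n + 1), (φ ^ (i : ℤ)) (latCoe (g i))) - v‖
        ≤ (C * ‖Pc‖ * (1 / 2) * lam) * lam ^ n := by
    intro n
    rw [hkey n]
    calc ‖(φ ^ ((n + 1 : ℕ) : ℤ)) (P (e n))‖ ≤ C * lam ^ (n + 1) * ‖P (e n)‖ :=
          hcontr (e n) (n + 1)
      _ ≤ C * lam ^ (n + 1) * (‖Pc‖ * (1 / 2)) := by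
          apply mul_le_mul_of_nonneg_left _ (by positivity)
          calc ‖P (e n)‖ = ‖Pc (e n)‖ := rfl
            _ ≤ ‖Pc‖ * ‖e n‖ := Pc.le_opNorm (e n)
            _ ≤ ‖Pc‖ * (1 / 2) := by
                exact mul_le_mul_of_nonneg_left (he_norm n) (norm_nonneg _)
      _ = (C * ‖Pc‖ * (1 / 2) * lam) * lam ^ n := by ring
  rw [tendsto_iff_norm_sub_tendsto_zero]
  have hlim : Filter.Tendsto (fun n : ℕ => (C * ‖Pc‖ * (1 / 2) * lam) * lam ^ n)
      Filter.atTop (nhds 0) := by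
    have := (tendsto_pow_atTop_nhds_zero_of_lt_one hlam0.le hlam1).const_mul
      (C * ‖Pc‖ * (1 / 2) * lam)
    simpa using this
  exact squeeze_zero (fun n => norm_nonneg _) hbound hlim
end
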